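/- The d-dimensional grid graph P_{n_1} □ P_{n_2} □ ... □ P_{n_d} with every n_i ≥ 3 has distance-2 chromatic number exactly 2d + 1; i.e., the minimum number of colours in a proper colouring where any two vertices at distance ≤ 2 get distinct colours is 2d + 1. -/

import Mathlib

/-- The cartesian (box) product of a finite family of graphs. -/
def BoxProd {d : ℕ} {V : Fin d → Type*} (G : ∀ i, SimpleGraph (V i)) :
    SimpleGraph (∀ i, V i) where
  Adj v w := ∃ i, (G i).Adj (v i) (w i) ∧ ∀ j, j ≠ i → v j = w j
  symm := ⟨fun _ _ ⟨i, h, hj⟩ => ⟨i, h.symm, fun j hji => (hj j hji).symm⟩⟩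
  loopless := ⟨fun _ ⟨i, h, _⟩ => (G i).irrefl h⟩

/-- The `d`-dimensional grid graph `P_{n 0} □ ⋯ □ P_{n (d-1)}`. -/
def Grid {d : ℕ} (n : Fin d → ℕ) : SimpleGraph (∀ i, Fin (n i)) :=
  BoxProd fun i => SimpleGraph.pathGraph (n i)

/-- The distance-2 chromatic number of a graph: the minimum number of colours in a
proper colouring where vertices at distance at most two get distinct colours. -/
noncomputable def dist2ChromaticNumber {V : Type*} (G : SimpleGraph V) : ℕ :=
  sInf {k | ∃ c : V → ℕ,
    (∀ u v, G.Adj u v → c u ≠ c v) ∧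
    (∀ u v w, G.Adj u v → G.Adj v w → u ≠ w → c u ≠ c w) ∧
    (Set.range c).ncard ≤ k}

namespace Stmt19Aux

variable {d : ℕ} {n : Fin d → ℕ}

/-- weight function -/
def g (v : ∀ i : Fin d, Fin (n i)) : ℤ :=
  ∑ i : Fin d, (((i : ℕ) : ℤ) + 1) * ((v i : ℕ) : ℤ)

lemma g_diff {u v : ∀ i, Fin (n i)} {i : Fin d} (h : ∀ j, j ≠ i → u j = v j) :
    g u - g v = (((i : ℕ) : ℤ) + 1) * (((u i : ℕ) : ℤ) - ((v i : ℕ) : ℤ)) := by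
  unfold g
  rw [← Finset.sum_sub_distrib, Finset.sum_eq_single i]
  · ring
  · intro j _ hj; rw [h j hj]; ring
  · intro hi; exact absurd (Finset.mem_univ i) hi

lemma adj_data {u v : ∀ i, Fin (n i)} (h : (Grid n).Adj u v) :
    ∃ (i : Fin d) (e : ℤ), (e = 1 ∨ e = -1) ∧
      (((u i : ℕ) : ℤ) - ((v i : ℕ) : ℤ) = e) ∧ (∀ j, j ≠ i → u j = v j) := by
  obtain ⟨i, hadj, hrest⟩ : ∃ i, (SimpleGraph.pathGraph (n i)).Adj (u i) (v i) ∧ ∀ j, j ≠ i → u j = v j := h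
  rw [SimpleGraph.pathGraph_adj] at hadj
  rcases hadj with h1 | h1
  · exact ⟨i, -1, Or.inr rfl, by omega, hrest⟩
  · exact ⟨i, 1, Or.inl rfl, by omega, hrest⟩

/-- If two vertices have the same colour then `2d+1` divides `g u - g v`. -/
lemma mod_eq_of_color_eq {u v : ∀ i, Fin (n i)}
    (h : (g u % (2 * (d : ℤ) + 1)).toNat = (g v % (2 * (d : ℤ) + 1)).toNat) :
    (2 * (d : ℤ) + 1) ∣ (g u - g v) := by
  have h1 : g u % (2 * (d : ℤ) + 1) = g v % (2 * (d : ℤ) + 1) := by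
    have n1 := Int.emod_nonneg (g u) (by omega : (2 * (d : ℤ) + 1) ≠ 0)
    have n2 := Int.emod_nonneg (g v) (by omega : (2 * (d : ℤ) + 1) ≠ 0)
    omega
  exact Int.ModEq.dvd (Int.ModEq.symm h1)

/-- the all-ones centre vertex -/
def v0 (hn : ∀ i, 3 ≤ n i) : ∀ i, Fin (n i) := fun i => ⟨1, by have := hn i; omega⟩

/-- neighbour of the centre in direction `i`, sign `b` -/
def ver (hn : ∀ i, 3 ≤ n i) (i : Fin d) (b : Bool) : ∀ j, Fin (n j) :=
  Function.update (v0 hn) i ⟨if b then 2 else 0, by have := hn i; split <;> omega⟩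

lemma ver_self (hn : ∀ i, 3 ≤ n i) (i : Fin d) (b : Bool) :
    ((ver hn i b i : ℕ)) = if b then 2 else 0 := by
  unfold ver
  rw [Function.update_self]

lemma ver_ne (hn : ∀ i, 3 ≤ n i) (i : Fin d) (b : Bool) {j : Fin d} (hj : j ≠ i) :
    ver hn i b j = v0 hn j := by
  unfold ver
  exact Function.update_of_ne hj _ _

lemma ver_adj (hn : ∀ i, 3 ≤ n i) (i : Fin d) (b : Bool) :
    (Grid n).Adj (ver hn i b) (v0 hn) := by
  show ∃ i', (SimpleGraph.pathGraph (n i')).Adj (ver hn i b i') (v0 hn i') ∧ ∀ j, j ≠ i' → ver hn i b j = v0 hn j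
  refine ⟨i, ?_, fun j hj => ver_ne hn i b hj⟩
  rw [SimpleGraph.pathGraph_adj]
  have h1 := ver_self hn i b
  have h2 : ((v0 hn i : ℕ)) = 1 := rfl
  rw [h1, h2]
  cases b <;> norm_num

end Stmt19Aux

open Stmt19Aux in
theorem stmt19 {d : ℕ} (n : Fin d → ℕ) (hn : ∀ i, 3 ≤ n i) :
    dist2ChromaticNumber (Grid n) = 2 * d + 1 := by
  classical
  set c : (∀ i, Fin (n i)) → ℕ := fun v => (g v % (2 * (d : ℤ) + 1)).toNat with hc
  have hmem : (2 * d + 1) ∈ {k | ∃ c : (∀ i, Fin (n i)) → ℕ,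
      (∀ u v, (Grid n).Adj u v → c u ≠ c v) ∧
      (∀ u v w, (Grid n).Adj u v → (Grid n).Adj v w → u ≠ w → c u ≠ c w) ∧
      (Set.range c).ncard ≤ (2 * d + 1)} := by
    refine ⟨c, ?_, ?_, ?_⟩
    · intro u v huv hcol
      obtain ⟨i, e, he, hei, hrest⟩ := adj_data huv
      have hdiff : g u - g v = (((i : ℕ) : ℤ) + 1) * e := by rw [g_diff hrest, hei]
      have hdvd := mod_eq_of_color_eq (n := n) hcol
      rw [hdiff] at hdvd
      have hi : ((i : ℕ) : ℤ) < d := by exact_mod_cast i.isLt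
      have hz : (((i : ℕ) : ℤ) + 1) * e = 0 :=
        Int.eq_zero_of_abs_lt_dvd hdvd (by
          rcases he with rfl | rfl <;>
            simp only [mul_one, mul_neg_one] <;> rw [abs_lt] <;> constructor <;> omega)
      rcases he with rfl | rfl <;> omega
    · intro u v w huv hvw hne hcol
      obtain ⟨i, e1, he1, hei1, hrest1⟩ := adj_data huv
      obtain ⟨j, e2, he2, hei2, hrest2⟩ := adj_data hvw
      have hd1 : g u - g v = (((i : ℕ) : ℤ) + 1) * e1 := by rw [g_diff hrest1, hei1]
      have hd2 : g v - g w = (((j : ℕ) : ℤ) + 1) * e2 := by rw [g_diff hrest2, hei2]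
      have hdiff : g u - g w = (((i : ℕ) : ℤ) + 1) * e1 + (((j : ℕ) : ℤ) + 1) * e2 := by
        omega
      have hdvd := mod_eq_of_color_eq (n := n) hcol
      rw [hdiff] at hdvd
      have hi : ((i : ℕ) : ℤ) < d := by exact_mod_cast i.isLt
      have hj : ((j : ℕ) : ℤ) < d := by exact_mod_cast j.isLt
      have hz : (((i : ℕ) : ℤ) + 1) * e1 + (((j : ℕ) : ℤ) + 1) * e2 = 0 :=
        Int.eq_zero_of_abs_lt_dvd hdvd (by
          rcases he1 with rfl | rfl <;> rcases he2 with rfl | rfl <;>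
            simp only [mul_one, mul_neg_one] <;> rw [abs_lt] <;> constructor <;> omega)
      have hij : i = j := by
        by_contra hij
        have hij' : ((i : ℕ) : ℤ) ≠ ((j : ℕ) : ℤ) := by
          intro h; exact hij (Fin.ext (by exact_mod_cast h))
        rcases he1 with rfl | rfl <;> rcases he2 with rfl | rfl <;> omega
      subst hij
      have he12 : e1 + e2 = 0 := by
        rcases he1 with rfl | rfl <;> rcases he2 with rfl | rfl <;> omega
      apply hne
      funext k
      by_cases hk : k = i
      · subst hk
        have hval : ((u k : ℕ) : ℤ) = ((w k : ℕ) : ℤ) := by omega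
        exact Fin.ext (by exact_mod_cast hval)
      · rw [hrest1 k hk, hrest2 k hk]
    · have hsub : Set.range c ⊆ ↑(Finset.range (2 * d + 1)) := by
        rintro x ⟨v, rfl⟩
        simp only [Finset.coe_range, Set.mem_Iio]
        have n1 := Int.emod_nonneg (g v) (by omega : (2 * (d : ℤ) + 1) ≠ 0)
        have n2 := Int.emod_lt_of_pos (g v) (by omega : (0:ℤ) < 2 * d + 1)
        simp only [hc]
        omega
      calc (Set.range c).ncard ≤ (↑(Finset.range (2 * d + 1)) : Set ℕ).ncard :=
            Set.ncard_le_ncard hsub (Finset.range (2 * d + 1)).finite_toSet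
        _ = 2 * d + 1 := by rw [Set.ncard_coe_finset, Finset.card_range]
  -- lower bound
  have hlow : ∀ k ∈ {k | ∃ c : (∀ i, Fin (n i)) → ℕ,
      (∀ u v, (Grid n).Adj u v → c u ≠ c v) ∧
      (∀ u v w, (Grid n).Adj u v → (Grid n).Adj v w → u ≠ w → c u ≠ c w) ∧
      (Set.range c).ncard ≤ k}, 2 * d + 1 ≤ k := by
    rintro k ⟨c', h1, h2, h3⟩
    have hner : ∀ i b i' b', (i, b) ≠ (i', b') → ver hn i b ≠ ver hn i' b' := by
      intro i b i' b' hne heq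
      by_cases hii : i = i'
      · subst hii
        have hval := congrArg (fun f => ((f i : Fin (n i)) : ℕ)) heq
        rw [ver_self, ver_self] at hval
        have hb : b = b' := by
          cases b <;> cases b'
          · rfl
          · exact absurd hval (by norm_num)
          · exact absurd hval (by norm_num)
          · rfl
        exact hne (by rw [hb])
      · have hval := congrArg (fun f => ((f i : Fin (n i)) : ℕ)) heq
        rw [ver_self, ver_ne hn i' b' hii] at hval
        have h2' : ((v0 hn i : ℕ)) = 1 := rfl
        rw [h2'] at hval
        cases b <;> exact absurd hval (by norm_num)
    set F : Option (Fin d × Bool) → ℕ := fun o =>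
      match o with
      | none => c' (v0 hn)
      | some (i, b) => c' (ver hn i b) with hF
    have hFinj : Function.Injective F := by
      rintro (_ | ⟨i, b⟩) (_ | ⟨i', b'⟩) h
      · rfl
      · exact absurd h.symm (h1 _ _ (ver_adj hn i' b'))
      · exact absurd h (h1 _ _ (ver_adj hn i b))
      · by_contra hne
        have hpair : (i, b) ≠ (i', b') := fun hp => hne (by rw [hp])
        exact h2 _ (v0 hn) _ (ver_adj hn i b) ((ver_adj hn i' b').symm)
          (hner i b i' b' hpair) h
    have hTsub : ↑(Finset.univ.image F) ⊆ Set.range c' := by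
      intro x hx
      simp only [Finset.coe_image, Set.mem_image] at hx
      obtain ⟨o, _, rfl⟩ := hx
      cases o with
      | none => exact ⟨v0 hn, rfl⟩
      | some p => exact ⟨ver hn p.1 p.2, rfl⟩
    have hcard : (Finset.univ.image F).card = 2 * d + 1 := by
      rw [Finset.card_image_of_injective _ hFinj, Finset.card_univ,
        Fintype.card_option, Fintype.card_prod, Fintype.card_fin, Fintype.card_bool]
      omega
    calc 2 * d + 1 = (↑(Finset.univ.image F) : Set ℕ).ncard := by
          rw [Set.ncard_coe_finset, hcard]
      _ ≤ (Set.range c').ncard := Set.ncard_le_ncard hTsub (Set.finite_range c')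
      _ ≤ k := h3
  exact le_antisymm (Nat.sInf_le hmem) (le_csInf ⟨_, hmem⟩ hlow)
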